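/- For all reals α, γ, y and every natural number n, the non-central connection identity holds: (yα − γ)_n = ∑_{k=0}^{n} α^k·S(n,k;α,γ)·(y)_k, where S(n,k;α,γ) is the non-central generalized Stirling number. -/

import Mathlib

/-- Rising factorial `(x)_n = x(x+1)⋯(x+n−1)`. -/
noncomputable def risingFac (x : ℝ) (n : ℕ) : ℝ := ∏ i ∈ Finset.range n, (x + i)

/-- Rising factorial with increment `α`: `(x)_{n↑α} = ∏_{i<n} (x + iα)`. -/
noncomputable def risingFacInc (x α : ℝ) (n : ℕ) : ℝ := ∏ i ∈ Finset.range n, (x + i * α)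

/-- Falling factorial `(x)_{[n]} = x(x−1)⋯(x−n+1)`. -/
noncomputable def fallingFac (x : ℝ) (n : ℕ) : ℝ := ∏ i ∈ Finset.range n, (x - i)

/-- Compositions of `n` into `k` positive parts, as functions `Fin k → ℕ`. -/
def compositions (n k : ℕ) : Finset (Fin k → ℕ) :=
  (Fintype.piFinset fun _ => Finset.range (n + 1)).filter
    (fun f => (∀ i, 0 < f i) ∧ ∑ i, f i = n)

/-- Tuples of `k` nonnegative integers summing to `n`. -/
def weakCompositions (n k : ℕ) : Finset (Fin k → ℕ) :=
  (Fintype.piFinset fun _ => Finset.range (n + 1)).filter (fun f => ∑ i, f i = n)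

/-- Generalized (central) Stirling number
`S(n,k;α) = (n!/k!) ∑_{(n_1,…,n_k)} ∏_j (1−α)_{n_j−1}/n_j!`,
the sum over compositions of `n` into `k` positive parts. -/
noncomputable def genStirling (α : ℝ) (n k : ℕ) : ℝ :=
  (Nat.factorial n : ℝ) / (Nat.factorial k : ℝ) *
    ∑ f ∈ compositions n k, ∏ j, risingFac (1 - α) (f j - 1) / (Nat.factorial (f j) : ℝ)

/-- Non-central generalized Stirling number
`S(n,k;α,γ) = ∑_{s=k}^n C(n,s) S(s,k;α) (−γ)_{n−s}`. -/
noncomputable def genStirlingNC (α γ : ℝ) (n k : ℕ) : ℝ :=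
  ∑ s ∈ Finset.Icc k n, (n.choose s : ℝ) * genStirling α s k * risingFac (-γ) (n - s)

lemma risingFac_zero (x : ℝ) : risingFac x 0 = 1 := by simp [risingFac]

lemma risingFac_succ (x : ℝ) (n : ℕ) : risingFac x (n + 1) = risingFac x n * (x + n) := by
  simp [risingFac, Finset.prod_range_succ]

lemma mem_compositions {n k : ℕ} {f : Fin k → ℕ} :
    f ∈ compositions n k ↔ (∀ i, 0 < f i) ∧ ∑ i, f i = n := by
  simp only [compositions, Finset.mem_filter, Fintype.mem_piFinset, Finset.mem_range]
  constructor
  · rintro ⟨-, h⟩; exact h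
  · rintro ⟨h1, h2⟩
    refine ⟨fun i => ?_, h1, h2⟩
    have : f i ≤ ∑ j, f j := Finset.single_le_sum (fun j _ => Nat.zero_le _) (Finset.mem_univ i)
    omega

/-- summand -/
noncomputable def cc (α : ℝ) (m : ℕ) : ℝ := risingFac (1 - α) (m - 1) / (Nat.factorial m : ℝ)

noncomputable def TT (α : ℝ) (n k : ℕ) : ℝ := ∑ f ∈ compositions n k, ∏ j, cc α (f j)

lemma genStirling_eq (α : ℝ) (n k : ℕ) :
    genStirling α n k = (Nat.factorial n : ℝ) / (Nat.factorial k : ℝ) * TT α n k := rfl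

lemma cc_one (α : ℝ) : cc α 1 = 1 := by simp [cc, risingFac_zero]

lemma cc_weight (α : ℝ) (m : ℕ) :
    ((m : ℝ) + 2) * cc α (m + 2) = ((m : ℝ) + 1 - α) * cc α (m + 1) := by
  have h2 : ((Nat.factorial (m+2) : ℕ) : ℝ) = ((m:ℝ)+2) * (Nat.factorial (m+1) : ℝ) := by
    rw [Nat.factorial_succ]; push_cast; ring
  simp only [cc, Nat.add_sub_cancel]
  rw [show m + 2 - 1 = m + 1 from rfl, risingFac_succ, h2]
  have hm1 : (Nat.factorial (m+1) : ℝ) ≠ 0 := Nat.cast_ne_zero.mpr (Nat.factorial_ne_zero _)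
  have hm2 : ((m:ℝ)+2) ≠ 0 := by positivity
  field_simp
  ring

lemma weight_ge_two (α : ℝ) {m : ℕ} (h1 : 1 ≤ m) (h2 : m ≠ 1) :
    (m : ℝ) * cc α m = (((m - 1 : ℕ) : ℝ) - α) * cc α (m - 1) := by
  obtain ⟨m', rfl⟩ : ∃ m', m = m' + 2 := ⟨m - 2, by omega⟩
  have := cc_weight α m'
  rw [show m' + 2 - 1 = m' + 1 from rfl]
  push_cast
  convert this using 2 <;> ring

lemma per_coord (α : ℝ) (n k : ℕ) (j : Fin (k+1)) :
    ∑ f ∈ compositions (n+1) (k+1), (f j : ℝ) * ∏ i, cc α (f i)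
      = TT α n k + ∑ g ∈ compositions n (k+1), ((g j : ℝ) - α) * ∏ i, cc α (g i) := by
  classical
  rw [← Finset.sum_filter_add_sum_filter_not (compositions (n+1) (k+1)) (fun f => f j = 1)]
  congr 1
  · -- f j = 1 part ↦ compositions n k
    rw [TT]
    refine Finset.sum_bij' (fun f _ => f ∘ j.succAbove) (fun g _ => j.insertNth 1 g)
      ?_ ?_ ?_ ?_ ?_
    · rintro f hf
      rw [Finset.mem_filter, mem_compositions] at hf
      obtain ⟨⟨hpos, hsum⟩, hj1⟩ := hf
      rw [mem_compositions]
      refine ⟨fun i => hpos _, ?_⟩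
      have h := Fin.sum_univ_succAbove f j
      rw [hj1] at h
      simp only [Function.comp_apply]
      omega
    · rintro g hg
      rw [mem_compositions] at hg
      obtain ⟨hpos, hsum⟩ := hg
      rw [Finset.mem_filter, mem_compositions]
      refine ⟨⟨fun i => ?_, ?_⟩, by simp⟩
      · rcases eq_or_ne i j with rfl | hne
        · simp
        · obtain ⟨i', rfl⟩ := Fin.exists_succAbove_eq hne
          simp [hpos]
      · rw [Fin.sum_univ_succAbove _ j]
        simp only [Fin.insertNth_apply_same, Fin.insertNth_apply_succAbove]
        omega
    · rintro f hf
      rw [Finset.mem_filter] at hf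
      funext i
      rcases eq_or_ne i j with rfl | hne
      · simp [hf.2]
      · obtain ⟨i', rfl⟩ := Fin.exists_succAbove_eq hne
        simp
    · rintro g hg
      funext i
      simp
    · rintro f hf
      rw [Finset.mem_filter] at hf
      rw [Fin.prod_univ_succAbove (fun i => cc α (f i)) j, hf.2, cc_one]
      simp
  · -- f j ≠ 1 part ↦ compositions n (k+1), decrement at j
    refine Finset.sum_bij' (fun f _ => Function.update f j (f j - 1))
      (fun g _ => Function.update g j (g j + 1)) ?_ ?_ ?_ ?_ ?_
    · rintro f hf
      rw [Finset.mem_filter, mem_compositions] at hf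
      obtain ⟨⟨hpos, hsum⟩, hj1⟩ := hf
      have hfj : 2 ≤ f j := by have := hpos j; omega
      rw [mem_compositions]
      beta_reduce
      constructor
      · intro i
        rcases eq_or_ne i j with rfl | hne
        · simp; omega
        · rw [Function.update_of_ne hne]; exact hpos i
      · rw [Finset.sum_update_of_mem (Finset.mem_univ j)]
        have h2 : f j + ∑ i ∈ Finset.univ \ {j}, f i = n + 1 := by
          rw [← hsum, ← Finset.sum_update_of_mem (Finset.mem_univ j)]
          congr 1
          funext i
          rcases eq_or_ne i j with rfl | hne
          · simp
          · rw [Function.update_of_ne hne]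
        omega
    · rintro g hg
      rw [mem_compositions] at hg
      obtain ⟨hpos, hsum⟩ := hg
      rw [Finset.mem_filter, mem_compositions]
      beta_reduce
      refine ⟨⟨fun i => ?_, ?_⟩, ?_⟩
      · rcases eq_or_ne i j with rfl | hne
        · simp
        · rw [Function.update_of_ne hne]; exact hpos i
      · rw [Finset.sum_update_of_mem (Finset.mem_univ j)]
        have h2 : g j + ∑ i ∈ Finset.univ \ {j}, g i = n := by
          rw [← hsum, ← Finset.sum_update_of_mem (Finset.mem_univ j)]
          congr 1
          funext i
          rcases eq_or_ne i j with rfl | hne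
          · simp
          · rw [Function.update_of_ne hne]
        omega
      · simp only [Function.update_self]
        have := hpos j
        omega
    · rintro f hf
      rw [Finset.mem_filter, mem_compositions] at hf
      obtain ⟨⟨hpos, hsum⟩, hj1⟩ := hf
      have hfj : 2 ≤ f j := by have := hpos j; omega
      funext i
      rcases eq_or_ne i j with rfl | hne
      · simp; omega
      · simp [Function.update_of_ne hne]
    · rintro g hg
      funext i
      rcases eq_or_ne i j with rfl | hne
      · simp
      · simp [Function.update_of_ne hne]
    · rintro f hf
      rw [Finset.mem_filter, mem_compositions] at hf
      obtain ⟨⟨hpos, hsum⟩, hj1⟩ := hf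
      have hfj : 2 ≤ f j := by have := hpos j; omega
      have hprod : ∏ i ∈ Finset.univ.erase j, cc α (Function.update f j (f j - 1) i)
          = ∏ i ∈ Finset.univ.erase j, cc α (f i) := by
        refine Finset.prod_congr rfl fun i hi => ?_
        rw [Function.update_of_ne (Finset.ne_of_mem_erase hi)]
      beta_reduce
      rw [← Finset.mul_prod_erase Finset.univ (fun i => cc α (f i)) (Finset.mem_univ j),
          ← Finset.mul_prod_erase Finset.univ
            (fun i => cc α (Function.update f j (f j - 1) i)) (Finset.mem_univ j),
          hprod]
      simp only [Function.update_self]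
      have hw := weight_ge_two α (le_trans one_le_two hfj) (by omega) (m := f j)
      have hc : ((f j - 1 : ℕ) : ℝ) = (f j : ℝ) - 1 := by
        have h1 : 1 ≤ f j := le_trans one_le_two hfj
        push_cast [Nat.cast_sub h1]
        ring
      rw [hc] at hw ⊢
      linear_combination (∏ i ∈ Finset.univ.erase j, cc α (f i)) * hw

lemma TT_rec (α : ℝ) (n k : ℕ) :
    ((n : ℝ) + 1) * TT α (n+1) (k+1)
      = ((k : ℝ) + 1) * TT α n k + ((n : ℝ) - ((k : ℝ) + 1) * α) * TT α n (k+1) := by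
  have h1 : ((n : ℝ) + 1) * TT α (n+1) (k+1)
      = ∑ j : Fin (k+1), ∑ f ∈ compositions (n+1) (k+1), (f j : ℝ) * ∏ i, cc α (f i) := by
    rw [Finset.sum_comm, TT, Finset.mul_sum]
    refine Finset.sum_congr rfl fun f hf => ?_
    rw [mem_compositions] at hf
    rw [← Finset.sum_mul]
    congr 1
    rw [← Nat.cast_sum, hf.2]
    push_cast; ring
  rw [h1]
  have h2 : ∀ j : Fin (k+1), ∑ f ∈ compositions (n+1) (k+1), (f j : ℝ) * ∏ i, cc α (f i)
      = TT α n k + ∑ g ∈ compositions n (k+1), ((g j : ℝ) - α) * ∏ i, cc α (g i) :=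
    per_coord α n k
  rw [Finset.sum_congr rfl fun j _ => h2 j, Finset.sum_add_distrib, Finset.sum_const,
    Finset.card_univ, Fintype.card_fin, Finset.sum_comm]
  congr 1
  · simp [mul_comm]
  · rw [TT, Finset.mul_sum]
    refine Finset.sum_congr rfl fun g hg => ?_
    rw [mem_compositions] at hg
    rw [← Finset.sum_mul, Finset.sum_sub_distrib, Finset.sum_const, Finset.card_univ,
      Fintype.card_fin, ← Nat.cast_sum, hg.2]
    push_cast; ring

lemma genStirling_of_lt (α : ℝ) {n k : ℕ} (h : n < k) : genStirling α n k = 0 := by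
  rw [genStirling]
  have : compositions n k = ∅ := by
    rw [Finset.eq_empty_iff_forall_notMem]
    intro f hf
    rw [mem_compositions] at hf
    have : k ≤ ∑ i, f i := by
      calc k = ∑ _i : Fin k, 1 := by simp
        _ ≤ ∑ i, f i := Finset.sum_le_sum fun i _ => hf.1 i
    omega
  rw [this, Finset.sum_empty, mul_zero]

lemma genStirling_succ_zero (α : ℝ) (n : ℕ) : genStirling α (n+1) 0 = 0 := by
  rw [genStirling]
  have : compositions (n+1) 0 = ∅ := by
    rw [Finset.eq_empty_iff_forall_notMem]
    intro f hf
    rw [mem_compositions] at hf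
    simpa using hf.2
  rw [this, Finset.sum_empty, mul_zero]

lemma genStirling_zero_zero (α : ℝ) : genStirling α 0 0 = 1 := by
  rw [genStirling]
  have : compositions 0 0 = {fun i => 0} := by
    rw [Finset.eq_singleton_iff_unique_mem]
    constructor
    · rw [mem_compositions]
      exact ⟨fun i => i.elim0, by simp⟩
    · intro f _; funext i; exact i.elim0
  rw [this]
  simp

lemma genStirling_rec (α : ℝ) (n k : ℕ) :
    genStirling α (n+1) (k+1)
      = genStirling α n k + ((n : ℝ) - ((k : ℝ) + 1) * α) * genStirling α n (k+1) := by
  have h := TT_rec α n k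
  rw [genStirling_eq, genStirling_eq, genStirling_eq]
  have hfn : (Nat.factorial n : ℝ) ≠ 0 := Nat.cast_ne_zero.mpr (Nat.factorial_ne_zero _)
  have hfk : (Nat.factorial k : ℝ) ≠ 0 := Nat.cast_ne_zero.mpr (Nat.factorial_ne_zero _)
  have e1 : (Nat.factorial (n+1) : ℝ) = ((n:ℝ)+1) * (Nat.factorial n : ℝ) := by
    rw [Nat.factorial_succ]; push_cast; ring
  have e2 : (Nat.factorial (k+1) : ℝ) = ((k:ℝ)+1) * (Nat.factorial k : ℝ) := by
    rw [Nat.factorial_succ]; push_cast; ring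
  rw [e1, e2]
  have hk1 : ((k:ℝ)+1) ≠ 0 := by positivity
  calc ((n:ℝ)+1) * (Nat.factorial n : ℝ) / (((k:ℝ)+1) * (Nat.factorial k : ℝ))
        * TT α (n+1) (k+1)
      = (Nat.factorial n : ℝ) / (((k:ℝ)+1) * (Nat.factorial k : ℝ))
        * (((n:ℝ)+1) * TT α (n+1) (k+1)) := by ring
    _ = (Nat.factorial n : ℝ) / (((k:ℝ)+1) * (Nat.factorial k : ℝ))
        * (((k : ℝ) + 1) * TT α n k + ((n : ℝ) - ((k : ℝ) + 1) * α) * TT α n (k+1)) := by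
          rw [h]
    _ = _ := by field_simp

lemma NC_eq_range (α γ : ℝ) (n k : ℕ) :
    genStirlingNC α γ n k
      = ∑ s ∈ Finset.range (n+1), (n.choose s : ℝ) * genStirling α s k * risingFac (-γ) (n - s) := by
  rw [genStirlingNC]
  refine Finset.sum_subset ?_ ?_
  · intro s hs
    rw [Finset.mem_Icc] at hs
    rw [Finset.mem_range]
    omega
  · intro s hs hs'
    rw [Finset.mem_range] at hs
    rw [Finset.mem_Icc] at hs'
    have : s < k := by omega
    rw [genStirling_of_lt α this]
    ring

lemma NC_zero_right (α γ : ℝ) (n : ℕ) : genStirlingNC α γ n 0 = risingFac (-γ) n := by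
  rw [NC_eq_range]
  rw [Finset.sum_eq_single 0]
  · simp [genStirling_zero_zero]
  · intro s hs hs0
    obtain ⟨s', rfl⟩ : ∃ s', s = s' + 1 := ⟨s - 1, by omega⟩
    rw [genStirling_succ_zero]
    ring
  · intro h
    simp at h

lemma NC_of_lt (α γ : ℝ) {n k : ℕ} (h : n < k) : genStirlingNC α γ n k = 0 := by
  rw [genStirlingNC, Finset.Icc_eq_empty (by omega), Finset.sum_empty]

lemma star (α γ : ℝ) (n k : ℕ) :
    ∑ s ∈ Finset.range (n+1),
        (n.choose (s+1) : ℝ) * genStirling α (s+1) (k+1) * risingFac (-γ) (n - s)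
      = ∑ s ∈ Finset.range (n+1), ((n:ℝ) - (s:ℝ) - γ) *
          ((n.choose s : ℝ) * genStirling α s (k+1) * risingFac (-γ) (n - s)) := by
  have key : ∀ G : ℕ → ℝ, G 0 = 0 → G (n+1) = 0 →
      ∑ s ∈ Finset.range (n+1), G (s+1) = ∑ s ∈ Finset.range (n+1), G s := by
    intro G h0 htop
    have h1 := Finset.sum_range_succ' G (n+1)
    have h2 := Finset.sum_range_succ G (n+1)
    rw [h0, add_zero] at h1
    rw [htop, add_zero] at h2
    rw [h1] at h2
    exact h2
  have := key (fun s => (n.choose s : ℝ) * genStirling α s (k+1) * risingFac (-γ) (n + 1 - s))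
    (by simp [genStirling_of_lt α (Nat.succ_pos k)])
    (by simp [Nat.choose_succ_self])
  calc ∑ s ∈ Finset.range (n+1),
        (n.choose (s+1) : ℝ) * genStirling α (s+1) (k+1) * risingFac (-γ) (n - s)
      = ∑ s ∈ Finset.range (n+1),
        (n.choose (s+1) : ℝ) * genStirling α (s+1) (k+1) * risingFac (-γ) (n + 1 - (s+1)) := by
        refine Finset.sum_congr rfl fun s hs => ?_
        congr 2
        omega
    _ = ∑ s ∈ Finset.range (n+1),
        (n.choose s : ℝ) * genStirling α s (k+1) * risingFac (-γ) (n + 1 - s) := this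
    _ = _ := by
        refine Finset.sum_congr rfl fun s hs => ?_
        rw [Finset.mem_range] at hs
        have h1 : n + 1 - s = (n - s) + 1 := by omega
        have h2 : ((n - s : ℕ) : ℝ) = (n : ℝ) - (s : ℝ) := by
          rw [Nat.cast_sub (by omega)]
        rw [h1, risingFac_succ, h2]
        ring

lemma NC_rec (α γ : ℝ) (n k : ℕ) :
    genStirlingNC α γ (n+1) (k+1)
      = genStirlingNC α γ n k
        + ((n:ℝ) - γ - ((k:ℝ)+1) * α) * genStirlingNC α γ n (k+1) := by
  rw [NC_eq_range α γ (n+1) (k+1), NC_eq_range α γ n k, NC_eq_range α γ n (k+1)]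
  rw [Finset.sum_range_succ']
  have h0 : ((n+1).choose 0 : ℝ) * genStirling α 0 (k+1) * risingFac (-γ) (n + 1 - 0) = 0 := by
    simp [genStirling_of_lt α (Nat.succ_pos k)]
  rw [h0, add_zero]
  have hterm : ∀ s ∈ Finset.range (n+1),
      ((n+1).choose (s+1) : ℝ) * genStirling α (s+1) (k+1) * risingFac (-γ) (n + 1 - (s+1))
        = (n.choose s : ℝ) * genStirling α s k * risingFac (-γ) (n - s)
          + ((s:ℝ) - ((k:ℝ)+1)*α) *
            ((n.choose s : ℝ) * genStirling α s (k+1) * risingFac (-γ) (n - s))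
          + (n.choose (s+1) : ℝ) * genStirling α (s+1) (k+1) * risingFac (-γ) (n - s) := by
    intro s hs
    have hc : ((n+1).choose (s+1) : ℝ) = (n.choose s : ℝ) + (n.choose (s+1) : ℝ) := by
      rw [Nat.choose_succ_succ]; push_cast; ring
    have hd : n + 1 - (s + 1) = n - s := by omega
    rw [hd, hc, genStirling_rec]
    ring
  rw [Finset.sum_congr rfl hterm, Finset.sum_add_distrib, Finset.sum_add_distrib, star]
  rw [Finset.mul_sum]
  rw [add_assoc, ← Finset.sum_add_distrib]
  congr 1
  refine Finset.sum_congr rfl fun s hs => ?_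
  ring

theorem main_thm (α γ y : ℝ) (n : ℕ) :
    risingFac (y * α - γ) n =
      ∑ k ∈ Finset.range (n + 1), α ^ k * genStirlingNC α γ n k * risingFac y k := by
  induction n with
  | zero => simp [risingFac_zero, Finset.sum_range_one, NC_zero_right]
  | succ n ih =>
    have hA : risingFac (y*α-γ) (n+1)
        = ∑ k ∈ Finset.range (n+1),
            (α^(k+1) * genStirlingNC α γ n k * risingFac y (k+1)
              + ((n:ℝ) - γ - (k:ℝ)*α) * (α^k * genStirlingNC α γ n k * risingFac y k)) := by
      rw [risingFac_succ, ih, Finset.sum_mul]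
      refine Finset.sum_congr rfl fun k hk => ?_
      rw [risingFac_succ y k]
      ring
    have hHtop : ((n:ℝ) - γ - ((n+1:ℕ):ℝ)*α)
        * (α^(n+1) * genStirlingNC α γ n (n+1) * risingFac y (n+1)) = 0 := by
      rw [NC_of_lt α γ (Nat.lt_succ_self n)]
      ring
    have hH0 : α ^ 0 * genStirlingNC α γ (n+1) 0 * risingFac y 0
        = ((n:ℝ) - γ - ((0:ℕ):ℝ)*α)
          * (α^0 * genStirlingNC α γ n 0 * risingFac y 0) := by
      rw [NC_zero_right, NC_zero_right, risingFac_succ]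
      simp [risingFac_zero]
      ring
    have hstep : ∀ k : ℕ, α^(k+1) * genStirlingNC α γ (n+1) (k+1) * risingFac y (k+1)
        = α^(k+1) * genStirlingNC α γ n k * risingFac y (k+1)
          + ((n:ℝ) - γ - ((k+1:ℕ):ℝ)*α)
            * (α^(k+1) * genStirlingNC α γ n (k+1) * risingFac y (k+1)) := by
      intro k
      rw [NC_rec]
      push_cast
      ring
    set H : ℕ → ℝ := fun k => ((n:ℝ) - γ - ((k:ℕ):ℝ)*α)
      * (α^k * genStirlingNC α γ n k * risingFac y k) with hH
    have hshift : ∑ k ∈ Finset.range (n+1), H k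
        = ∑ k ∈ Finset.range (n+1), H (k+1) + H 0 := by
      have h1 := Finset.sum_range_succ' H (n+1)
      have h2 := Finset.sum_range_succ H (n+1)
      have htop : H (n+1) = 0 := hHtop
      rw [htop, add_zero] at h2
      rw [← h2, h1]
    calc risingFac (y*α-γ) (n+1)
        = ∑ k ∈ Finset.range (n+1), α^(k+1) * genStirlingNC α γ n k * risingFac y (k+1)
          + ∑ k ∈ Finset.range (n+1), H k := by
            rw [hA, Finset.sum_add_distrib]
      _ = ∑ k ∈ Finset.range (n+1), α^(k+1) * genStirlingNC α γ n k * risingFac y (k+1)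
          + (∑ k ∈ Finset.range (n+1), H (k+1) + H 0) := by rw [hshift]
      _ = (∑ k ∈ Finset.range (n+1),
            α^(k+1) * genStirlingNC α γ (n+1) (k+1) * risingFac y (k+1))
          + α ^ 0 * genStirlingNC α γ (n+1) 0 * risingFac y 0 := by
            rw [hH0, ← add_assoc, ← Finset.sum_add_distrib]
            congr 1
            refine Finset.sum_congr rfl fun k hk => ?_
            rw [hstep k]
      _ = ∑ k ∈ Finset.range (n+1+1), α^k * genStirlingNC α γ (n+1) k * risingFac y k := by
            rw [Finset.sum_range_succ'
              (fun k => α^k * genStirlingNC α γ (n+1) k * risingFac y k) (n+1)]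

/-- Non-central connection identity `(yα − γ)_n = ∑_k α^k S(n,k;α,γ) (y)_k`. -/
theorem rising_noncentral_eq_sum_pow_genStirlingNC (α γ y : ℝ) (n : ℕ) :
    risingFac (y * α - γ) n =
      ∑ k ∈ Finset.range (n + 1), α ^ k * genStirlingNC α γ n k * risingFac y k :=
  main_thm α γ y n
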